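/- Let A and K be n×n real matrices and m a positive integer. (i) If v ∈ ℝ^n is an eigenvector of A + m·K with eigenvalue λ, then (e/√m) ⊗ v is an eigenvector of rQK(A,K) with eigenvalue λ, where e is the all-ones vector of length m. (ii) If w ∈ ℝ^m satisfies Σᵢ wᵢ = 0 and v ∈ ℝ^n is an eigenvector of A with eigenvalue μ, then w ⊗ v is an eigenvector of rQK(A,K) with eigenvalue μ (provided w ⊗ v ≠ 0). -/
import Mathlib


open Matrix Kronecker

/-- The restricted quasi-Kronecker matrix `rQK(A, K) = I_m ⊗ A + (e eᵗ) ⊗ K`. -/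
noncomputable def rQK {n : ℕ} (m : ℕ) (A K : Matrix (Fin n) (Fin n) ℝ) :
    Matrix (Fin m × Fin n) (Fin m × Fin n) ℝ :=
  (1 : Matrix (Fin m) (Fin m) ℝ) ⊗ₖ A + (Matrix.of fun _ _ => (1 : ℝ)) ⊗ₖ K

lemma rQK_aux {n m : ℕ} (A K : Matrix (Fin n) (Fin n) ℝ) (w : Fin m → ℝ) (v : Fin n → ℝ) :
    (rQK m A K).mulVec (fun p : Fin m × Fin n => w p.1 * v p.2)
    = fun p => w p.1 * A.mulVec v p.2 + (∑ i, w i) * K.mulVec v p.2 := by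
  funext p
  simp [rQK, mulVec, dotProduct, kroneckerMap_apply, Fintype.sum_prod_type, Matrix.one_apply,
    Finset.mul_sum, Finset.sum_mul, add_mul, ite_mul, Finset.sum_add_distrib]
  congr 1
  · exact Finset.sum_congr rfl fun x _ => by ring
  · rw [Finset.sum_comm]
    exact Finset.sum_congr rfl fun j _ => Finset.sum_congr rfl fun x _ => by ring

/-- Eigenvectors of `rQK(A,K)`:
(i) if `v` is an eigenvector of `A + m·K` with eigenvalue `λ`, then `(e/√m) ⊗ v` is
a (nonzero) eigenvector of `rQK(A,K)` with eigenvalue `λ`;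
(ii) if `w` sums to zero and `v` is an eigenvector of `A` with eigenvalue `μ`, then
`w ⊗ v` satisfies `rQK(A,K) (w ⊗ v) = μ (w ⊗ v)` (an eigenvector whenever it is
nonzero). -/
theorem rQK_eigenvectors (n m : ℕ) (hm : 0 < m) (A K : Matrix (Fin n) (Fin n) ℝ) :
    (∀ (v : Fin n → ℝ) (lam : ℝ), v ≠ 0 →
      (A + (m : ℝ) • K).mulVec v = lam • v →
        (fun p : Fin m × Fin n => (Real.sqrt m)⁻¹ * v p.2) ≠ 0 ∧
          (rQK m A K).mulVec (fun p : Fin m × Fin n => (Real.sqrt m)⁻¹ * v p.2) =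
            lam • fun p : Fin m × Fin n => (Real.sqrt m)⁻¹ * v p.2) ∧
    (∀ (w : Fin m → ℝ) (v : Fin n → ℝ) (mu : ℝ), (∑ i, w i) = 0 → v ≠ 0 →
      A.mulVec v = mu • v →
        (rQK m A K).mulVec (fun p : Fin m × Fin n => w p.1 * v p.2) =
          mu • fun p : Fin m × Fin n => w p.1 * v p.2) := by
  constructor
  · intro v lam hv heig
    have hc : (Real.sqrt m)⁻¹ ≠ 0 := by
      positivity
    constructor
    · intro h0
      apply hv
      funext j
      have := congrFun h0 (⟨0, hm⟩, j)
      simpa [hc] using this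
    · have := rQK_aux A K (fun _ : Fin m => (Real.sqrt m)⁻¹) v
      rw [this]
      funext p
      have h := congrFun heig p.2
      simp only [Matrix.add_mulVec, Matrix.smul_mulVec, Pi.add_apply, Pi.smul_apply,
        smul_eq_mul] at h
      simp only [Finset.sum_const, Finset.card_univ, Fintype.card_fin, nsmul_eq_mul,
        Pi.smul_apply, smul_eq_mul]
      linear_combination (Real.sqrt m)⁻¹ * h
  · intro w v mu hw hv heig
    rw [rQK_aux, hw]
    funext p
    have h := congrFun heig p.2
    simp only [Pi.smul_apply, smul_eq_mul] at h ⊢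
    rw [h]; ring
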